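/- Let f : ℝ² → ℝ be a continuous compactly supported function all of whose line integrals vanish, i.e. ∫_ℝ f(x + tξ) dt = 0 for every x ∈ ℝ² and every unit vector ξ. Then f = 0 identically. -/

import Mathlib

open MeasureTheory FourierTransform Real
open scoped RealInnerProductSpace

namespace Stmt17Aux

noncomputable def xi (θ : EuclideanSpace ℝ (Fin 2)) : EuclideanSpace ℝ (Fin 2) :=
  (WithLp.equiv 2 (Fin 2 → ℝ)).symm ![-θ 1, θ 0]

lemma norm_eq2 (v : EuclideanSpace ℝ (Fin 2)) : ‖v‖ = √(v 0 ^ 2 + v 1 ^ 2) := by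
  rw [EuclideanSpace.norm_eq]
  simp [Fin.sum_univ_two, Real.norm_eq_abs, _root_.sq_abs]

lemma norm_xi (θ : EuclideanSpace ℝ (Fin 2)) : ‖xi θ‖ = ‖θ‖ := by
  rw [norm_eq2, norm_eq2]
  show √((-θ 1) ^ 2 + (θ 0) ^ 2) = _
  ring_nf

lemma sum_sq (θ : EuclideanSpace ℝ (Fin 2)) (hθ : ‖θ‖ = 1) : ∑ i, θ i ^ 2 = 1 := by
  have h1 := norm_eq2 θ
  rw [hθ] at h1
  have h2 : θ 0 ^ 2 + θ 1 ^ 2 = 1 := by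
    nlinarith [Real.sq_sqrt (show (0:ℝ) ≤ θ 0 ^ 2 + θ 1 ^ 2 by positivity)]
  simpa [Fin.sum_univ_two] using h2

lemma exists_b (θ : EuclideanSpace ℝ (Fin 2)) (hθ : ‖θ‖ = 1) :
    ∃ b : OrthonormalBasis (Fin 2) ℝ (EuclideanSpace ℝ (Fin 2)), b 0 = θ ∧ b 1 = xi θ := by
  have horth : Orthonormal ℝ ![θ, xi θ] := by
    rw [orthonormal_iff_ite]
    intro i j
    fin_cases i <;> fin_cases j <;>
      simp [PiLp.inner_apply, Fin.sum_univ_two, xi] <;>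
      [exact Or.inl hθ; ring; ring; exact Or.inl ((norm_xi θ).trans hθ)] <;>
      nlinarith [norm_eq2 θ, hθ, Real.sq_sqrt (show (0:ℝ) ≤ θ 0 ^ 2 + θ 1 ^ 2 by positivity),
        Real.sqrt_nonneg (θ 0 ^ 2 + θ 1 ^ 2)]
  let bb := basisOfLinearIndependentOfCardEqFinrank horth.linearIndependent
    (by simp [finrank_euclideanSpace_fin])
  have hbb : ⇑bb = ![θ, xi θ] := coe_basisOfLinearIndependentOfCardEqFinrank _ _
  refine ⟨bb.toOrthonormalBasis (by rwa [hbb]), ?_, ?_⟩ <;>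
    rw [Module.Basis.coe_toOrthonormalBasis, hbb] <;> rfl

lemma exists_theta (w : EuclideanSpace ℝ (Fin 2)) :
    ∃ θ : EuclideanSpace ℝ (Fin 2), ‖θ‖ = 1 ∧ w = ‖w‖ • θ := by
  rcases eq_or_ne w 0 with h0 | h0
  · exact ⟨EuclideanSpace.single 0 1, by simp, by simp [h0]⟩
  · refine ⟨‖w‖⁻¹ • w, ?_, ?_⟩
    · simp [norm_smul, inv_mul_cancel₀ (norm_ne_zero_iff.2 h0)]
    · rw [smul_smul, mul_inv_cancel₀ (norm_ne_zero_iff.2 h0), one_smul]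

end Stmt17Aux

open Stmt17Aux

theorem stmt17
    (f : (Fin 2 → ℝ) → ℝ)
    (hf : Continuous f) (hfs : HasCompactSupport f)
    (h : ∀ (x ξ : Fin 2 → ℝ), (∑ i, ξ i ^ 2 = 1) →
      (∫ t : ℝ, f (x + t • ξ)) = 0) :
    f = 0 := by
  set eqv := WithLp.equiv 2 (Fin 2 → ℝ) with heqv
  set Fc : EuclideanSpace ℝ (Fin 2) → ℂ := fun x => (f (eqv x) : ℂ) with hFcdef
  have hFcont : Continuous Fc :=
    Complex.continuous_ofReal.comp (hf.comp (PiLp.continuous_ofLp 2 fun _ : Fin 2 => ℝ))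
  have hFsupp : HasCompactSupport Fc := by
    have h1 : HasCompactSupport (f ∘ (PiLp.continuousLinearEquiv 2 ℝ
        (fun _ : Fin 2 => ℝ)).toHomeomorph) :=
      hfs.comp_homeomorph _
    exact (h1.comp_left (g := fun r : ℝ => (r : ℂ)) Complex.ofReal_zero)
  have hFci : Integrable Fc := hFcont.integrable_of_hasCompactSupport hFsupp
  have key : ∀ w : EuclideanSpace ℝ (Fin 2), 𝓕 Fc w = 0 := by
    intro w
    obtain ⟨θ, hθ, hwθ⟩ := exists_theta w
    set ξ := xi θ with hξdef
    obtain ⟨b, hb0, hb1⟩ := exists_b θ hθ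
    have hθw : ⟪θ, w⟫ = ‖w‖ := by
      conv_lhs => rw [hwθ]
      rw [real_inner_smul_right, real_inner_self_eq_norm_mul_norm, hθ]
      simp
    have hξw : ⟪ξ, w⟫ = 0 := by
      conv_lhs => rw [hwθ]
      rw [real_inner_smul_right]
      have : ⟪ξ, θ⟫ = 0 := by
        simp [PiLp.inner_apply, Fin.sum_univ_two, hξdef, xi]
        ring
      rw [this, mul_zero]
    -- the measure preserving parametrization
    set M : (ℝ × ℝ) ≃ᵐ EuclideanSpace ℝ (Fin 2) :=
      (MeasurableEquiv.finTwoArrow.symm.trans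
        ((MeasurableEquiv.toLp 2 (Fin 2 → ℝ)).trans b.measurableEquiv.symm)) with hMdef
    have hA : MeasurePreserving (MeasurableEquiv.finTwoArrow (α := ℝ)).symm volume volume :=
      MeasurePreserving.symm _ (volume_preserving_finTwoArrow ℝ)
    have hB : MeasurePreserving (MeasurableEquiv.toLp 2 (Fin 2 → ℝ)) volume volume :=
      MeasurePreserving.symm _ (EuclideanSpace.volume_preserving_symm_measurableEquiv_toLp (Fin 2))
    have hC : MeasurePreserving b.measurableEquiv.symm volume volume :=
      MeasurePreserving.symm _ b.measurePreserving_measurableEquiv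
    have hM : MeasurePreserving M volume volume := hC.comp (hB.comp hA)
    have happ : ∀ p : ℝ × ℝ, M p = p.1 • θ + p.2 • ξ := by
      intro p
      show b.repr.symm ((MeasurableEquiv.toLp 2 (Fin 2 → ℝ))
        (MeasurableEquiv.finTwoArrow.symm p)) = _
      have : (MeasurableEquiv.toLp 2 (Fin 2 → ℝ))
          (MeasurableEquiv.finTwoArrow.symm p) = eqv.symm ![p.1, p.2] := rfl
      rw [this]
      rw [← b.sum_repr_symm]
      rw [Fin.sum_univ_two, hb0, hb1]
      rfl
    have hGint : Integrable (fun v => 𝐞 (-⟪v, w⟫) • Fc v) :=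
      (VectorFourier.fourierIntegral_convergent_iff (L := innerₗ (EuclideanSpace ℝ (Fin 2)))
        Real.continuous_fourierChar continuous_inner w).mpr hFci
    have hGMint : Integrable (fun p : ℝ × ℝ => 𝐞 (-⟪M p, w⟫) • Fc (M p)) :=
      (hM.integrable_comp_emb M.measurableEmbedding).mpr hGint
    rw [Real.fourier_eq,
      ← hM.integral_comp M.measurableEmbedding (fun v => 𝐞 (-⟪v, w⟫) • Fc v)]
    rw [MeasureTheory.Measure.volume_eq_prod] at hGMint ⊢
    rw [MeasureTheory.integral_prod _ hGMint]
    have inner_zero : ∀ s : ℝ, (∫ t : ℝ, 𝐞 (-⟪M (s, t), w⟫) • Fc (M (s, t))) = 0 := by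
      intro s
      have hunit : ∑ i, (eqv ξ) i ^ 2 = 1 := sum_sq ξ (by rw [hξdef, norm_xi, hθ])
      have hMst : ∀ t : ℝ, 𝐞 (-⟪M (s, t), w⟫) • Fc (M (s, t))
          = (𝐞 (-(s * ‖w‖)) : ℂ) * ((f (eqv (s • θ) + t • eqv ξ) : ℝ) : ℂ) := by
        intro t
        rw [happ (s, t), Circle.smul_def]
        have h1 : ⟪(s • θ + t • ξ : EuclideanSpace ℝ (Fin 2)), w⟫ = s * ‖w‖ := by
          rw [inner_add_left, real_inner_smul_left, real_inner_smul_left, hθw, hξw]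
          ring
        rw [h1]
        rfl
      have h0 := h (eqv (s • θ)) (eqv ξ) hunit
      rw [funext hMst, MeasureTheory.integral_const_mul]
      norm_cast
      rw [h0, Complex.ofReal_zero]
      exact mul_zero _
    simp only [inner_zero, integral_zero]
  have hF0 : 𝓕 Fc = 0 := funext key
  have hinv := hFcont.fourierInv_fourier_eq hFci (by rw [hF0]; exact integrable_zero _ _ _)
  rw [hF0] at hinv
  have hz : (𝓕⁻ (0 : EuclideanSpace ℝ (Fin 2) → ℂ)) = 0 := by
    ext v
    simp [Real.fourierInv_eq]
  rw [hz] at hinv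
  funext x
  have := congrFun hinv.symm (eqv.symm x)
  simpa [hFcdef] using this
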